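/- Let G be an H-graph for a tree H with exactly ℓ ≥ 2 leaves. Then the thinness of G is at most ℓ - 1. If ℓ ≤ 1 (H is a single vertex), then G is a complete graph and has thinness 1. -/

import Mathlib

/-- One step of subdividing an edge `uv`: replace `uv` by a new vertex `w`
(not a vertex of the current graph) and edges `uw`, `wv`. -/
def SubdivideEdge {α : Type*} (H H' : SimpleGraph α) : Prop :=
  ∃ u v w : α, H.Adj u v ∧ w ∉ H.support ∧
    H' = SimpleGraph.fromEdgeSet ((H.edgeSet \ {s(u, v)}) ∪ {s(u, w), s(w, v)})

/-- `H'` is a subdivision of `H`: obtained by a (possibly empty) sequence of edge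
subdivisions. -/
def IsSubdivisionOf {α : Type*} (H H' : SimpleGraph α) : Prop :=
  Relation.ReflTransGen SubdivideEdge H H'

/-- A vertex subset is connected if it induces a connected subgraph
(the empty set counts as connected). -/
def ConnSub {β : Type*} (G : SimpleGraph β) (S : Set β) : Prop :=
  S.Nonempty → (G.induce S).Connected

/-- A graph `G` is `k`-thin. -/
def IsKThin {W : Type*} (G : SimpleGraph W) (k : ℕ) : Prop :=
  ∃ f : W → ℕ, Function.Injective f ∧
    ∃ c : W → Fin k, ∀ r s t : W, f r < f s → f s < f t → c r = c s →
      G.Adj r t → G.Adj s t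

section ThinAuxSection

open SimpleGraph

set_option linter.unusedSectionVars false

namespace ThinAux

variable {α : Type*} [DecidableEq α] {H : SimpleGraph α}

/-- The unique path between two vertices of a tree. -/
noncomputable def tp (hH : H.IsTree) (u v : α) : H.Walk u v :=
  (hH.existsUnique_path u v).choose

variable (hH : H.IsTree)
include hH

lemma tp_isPath (u v : α) : (tp hH u v).IsPath :=
  (hH.existsUnique_path u v).choose_spec.1

lemma tp_eq {u v : α} (p : H.Walk u v) (hp : p.IsPath) : p = tp hH u v :=
  (hH.existsUnique_path u v).choose_spec.2 p hp

lemma tp_length (u v : α) : (tp hH u v).length = H.dist u v := by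
  obtain ⟨p, hp, hl⟩ := hH.isConnected.exists_path_of_dist u v
  rwa [tp_eq hH p hp] at hl

lemma tp_self (v : α) : tp hH v v = Walk.nil := (tp_eq hH _ Walk.IsPath.nil).symm

lemma tp_adj {u v : α} (e : H.Adj u v) : tp hH u v = Walk.cons e Walk.nil := by
  refine (tp_eq hH _ ?_).symm
  rw [Walk.cons_isPath_iff]
  exact ⟨Walk.IsPath.nil, by simp [e.ne]⟩

lemma dist_adj {u v : α} (e : H.Adj u v) : H.dist u v = 1 := by
  rw [← tp_length hH, tp_adj hH e]; rfl

lemma tp_split {u v y : α} (h : y ∈ (tp hH u v).support) :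
    tp hH u v = (tp hH u y).append (tp hH y v) := by
  have h1 : ((tp hH u v).takeUntil y h) = tp hH u y :=
    tp_eq hH _ ((tp_isPath hH u v).takeUntil h)
  have h2 : ((tp hH u v).dropUntil y h) = tp hH y v :=
    tp_eq hH _ ((tp_isPath hH u v).dropUntil h)
  have h3 := Walk.take_spec (tp hH u v) h
  rw [h1, h2] at h3
  exact h3.symm

lemma dist_add_of_mem {u v y : α} (h : y ∈ (tp hH u v).support) :
    H.dist u y + H.dist y v = H.dist u v := by
  have := congrArg Walk.length (tp_split hH h)
  rwa [Walk.length_append, tp_length, tp_length, tp_length, eq_comm] at this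

lemma tp_support_subset_left {u v y : α} (h : y ∈ (tp hH u v).support) :
    (tp hH u y).support ⊆ (tp hH u v).support := by
  rw [tp_split hH h]
  exact Walk.subset_support_append_left _ _

lemma tp_support_subset_right {u v y : α} (h : y ∈ (tp hH u v).support) :
    (tp hH y v).support ⊆ (tp hH u v).support := by
  rw [tp_split hH h]
  exact Walk.subset_support_append_right _ _

lemma dist_eq_zero {u v : α} (h : H.dist u v = 0) : u = v :=
  (hH.isConnected.dist_eq_zero_iff).mp h

/-- If `y, z` are on the path `u → v` with `dist u y ≤ dist u z`, then `y` is on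
the path `u → z`. -/
lemma mem_of_le {u v y z : α} (hy : y ∈ (tp hH u v).support)
    (hz : z ∈ (tp hH u v).support) (hle : H.dist u y ≤ H.dist u z) :
    y ∈ (tp hH u z).support := by
  rw [tp_split hH hz, Walk.mem_support_append_iff] at hy
  rcases hy with hy | hy
  · exact hy
  · have h1 := dist_add_of_mem hH hy
    have h2 := dist_add_of_mem hH hz
    have h3 : H.dist u y + H.dist y v = H.dist u v := by
      apply dist_add_of_mem hH
      exact tp_support_subset_right hH hz hy
    have h4 : H.dist z y = 0 := by omega
    have : z = y := dist_eq_zero hH h4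
    subst this
    exact Walk.end_mem_support _

lemma eq_of_mem_of_dist_eq {u v y z : α} (hy : y ∈ (tp hH u v).support)
    (hz : z ∈ (tp hH u v).support) (hd : H.dist u y = H.dist u z) : y = z := by
  have hm := mem_of_le hH hy hz hd.le
  have h1 := dist_add_of_mem hH hm
  have : H.dist y z = 0 := by omega
  exact dist_eq_zero hH this

/-- Decompose a nontrivial path from the back. -/
lemma tp_concat_decomp {u v : α} (hne : u ≠ v) :
    ∃ (x : α) (e : H.Adj x v), tp hH u v = (tp hH u x).concat e ∧ x ≠ v ∧
      H.dist u x + 1 = H.dist u v := by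
  obtain ⟨w, e, q, hq⟩ := Walk.exists_eq_cons_of_ne (Ne.symm hne) (tp hH u v).reverse
  have heq : tp hH u v = q.reverse.concat e.symm := by
    rw [Walk.concat_eq_append, ← Walk.reverse_cons, ← hq, Walk.reverse_reverse]
    exact e
  have hp : (q.reverse.concat e.symm).IsPath := heq ▸ tp_isPath hH u v
  have hq' : q.reverse.IsPath := by
    rw [Walk.concat_eq_append] at hp; exact hp.of_append_left
  have hqeq : q.reverse = tp hH u w := tp_eq hH _ hq'
  refine ⟨w, e.symm, by rw [← hqeq]; exact heq, e.ne', ?_⟩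
  have := congrArg Walk.length heq
  rw [tp_length, Walk.length_concat, hqeq, tp_length] at this
  omega

/-- Extending a path by an edge to a vertex not on it. -/
lemma tp_concat_of_not_mem {u v x : α} (e : H.Adj v x) (hx : x ∉ (tp hH u v).support) :
    tp hH u x = (tp hH u v).concat e ∧ H.dist u x = H.dist u v + 1 := by
  have hp : ((tp hH u v).concat e).IsPath := by
    rw [← Walk.isPath_reverse_iff, Walk.reverse_concat, Walk.cons_isPath_iff]
    refine ⟨(tp_isPath hH u v).reverse, ?_⟩
    rwa [Walk.support_reverse, List.mem_reverse]
  have heq := tp_eq hH _ hp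
  refine ⟨heq.symm, ?_⟩
  have := congrArg Walk.length heq
  rw [Walk.length_concat, tp_length, tp_length] at this
  omega

/-- Dichotomy for a neighbor `x` of `v`, relative to a root `ρ`. -/
lemma neighbor_dichotomy {ρ v x : α} (e : H.Adj v x) :
    (x ∈ (tp hH ρ v).support ∧ H.dist ρ x + 1 = H.dist ρ v) ∨
    (v ∈ (tp hH ρ x).support ∧ H.dist ρ x = H.dist ρ v + 1) := by
  by_cases hx : x ∈ (tp hH ρ v).support
  · left
    refine ⟨hx, ?_⟩
    have h1 := dist_add_of_mem hH hx
    have h2 := dist_adj hH e.symm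
    omega
  · right
    obtain ⟨heq, hd⟩ := tp_concat_of_not_mem hH e hx
    constructor
    · rw [heq, Walk.support_concat]
      simp [Walk.end_mem_support]
    · exact hd

/-- Gate lemma: the closest point `p` of a convex set `Sw` to `ρ` lies on every
path from `ρ` to a point of `Sw`. -/
lemma gate {Sw : Set α}
    (hconv : ∀ a b : α, a ∈ Sw → b ∈ Sw → ∀ y ∈ (tp hH a b).support, y ∈ Sw)
    {ρ p : α} (hp : p ∈ Sw) (hmin : ∀ y ∈ Sw, H.dist ρ p ≤ H.dist ρ y) :
    ∀ n x, H.dist p x = n → x ∈ Sw → p ∈ (tp hH ρ x).support := by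
  intro n
  induction n using Nat.strong_induction_on with
  | _ n IH =>
    intro x hdx hx
    rcases Nat.eq_zero_or_pos n with h0 | hpos
    · subst h0
      have : p = x := dist_eq_zero hH hdx
      subst this; exact Walk.end_mem_support _
    · have hne : p ≠ x := by
        rintro rfl; rw [SimpleGraph.dist_self] at hdx; omega
      obtain ⟨x', e, heq, hne', hd'⟩ := tp_concat_decomp hH hne
      have hx' : x' ∈ Sw := by
        apply hconv p x hp hx
        rw [heq, Walk.support_concat]; simp [Walk.end_mem_support]
      have hdist' : H.dist p x' = n - 1 := by omega
      have hmem' : p ∈ (tp hH ρ x').support := IH (n - 1) (by omega) x' hdist' hx'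
      rcases neighbor_dichotomy hH (ρ := ρ) e with ⟨hmem, hdd⟩ | ⟨hmem, hdd⟩
      · rw [tp_split hH hmem, Walk.mem_support_append_iff] at hmem'
        rcases hmem' with h | h
        · exact h
        · rw [tp_adj hH e.symm] at h
          simp only [Walk.support_cons, Walk.support_nil, List.mem_cons,
            List.mem_singleton, List.not_mem_nil, or_false] at h
          rcases h with rfl | rfl
          · exact absurd rfl hne
          · have := hmin x hx
            omega
      · exact tp_support_subset_left hH hmem hmem'

variable [Fintype α] [DecidableRel H.Adj]

lemma deg_one_of_max {r L : α} (hcard : 1 < Fintype.card α)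
    (hL : ∀ y : α, H.dist r y ≤ H.dist r L) : H.degree L = 1 := by
  have hLr : r ≠ L := by
    obtain ⟨y, hy⟩ := Fintype.exists_ne_of_one_lt_card hcard r
    have h1 : 0 < H.dist r y := hH.isConnected.pos_dist_of_ne (Ne.symm hy)
    have h2 := hL y
    intro h; rw [← h, SimpleGraph.dist_self] at h2; omega
  obtain ⟨u, e, heq, hneu, hdu⟩ := tp_concat_decomp hH hLr
  have hu : u ∈ (tp hH r L).support := by
    rw [heq, Walk.support_concat]; simp [Walk.end_mem_support]
  have huniq : ∀ x : α, H.Adj L x → x = u := by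
    intro x e'
    rcases neighbor_dichotomy hH (ρ := r) e' with ⟨hmem, hdd⟩ | ⟨_, hdd⟩
    · exact eq_of_mem_of_dist_eq hH hmem hu (by omega)
    · have := hL x; omega
  have hset : H.neighborFinset L = {u} := by
    apply Finset.eq_singleton_iff_unique_mem.mpr
    exact ⟨(H.mem_neighborFinset L u).mpr e.symm,
      fun x hx => huniq x ((H.mem_neighborFinset L x).mp hx)⟩
  rw [← H.card_neighborFinset_eq_degree, hset, Finset.card_singleton]

lemma exists_far_leaf (hcard : 1 < Fintype.card α) (r : α) :
    ∃ L, H.degree L = 1 ∧ 0 < H.dist r L ∧ ∀ y : α, H.dist r y ≤ H.dist r L := by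
  obtain ⟨L, _, hmax⟩ := Set.exists_max_image (Set.univ : Set α) (H.dist r)
    (Set.finite_univ) ⟨r, trivial⟩
  have hmax' : ∀ y : α, H.dist r y ≤ H.dist r L := fun y => hmax y trivial
  refine ⟨L, deg_one_of_max hH hcard hmax', ?_, hmax'⟩
  obtain ⟨y, hy⟩ := Fintype.exists_ne_of_one_lt_card hcard r
  have h1 : 0 < H.dist r y := hH.isConnected.pos_dist_of_ne (Ne.symm hy)
  have := hmax' y
  omega

lemma exists_other_leaf (hcard : 1 < Fintype.card α) (r : α) :
    ∃ L, H.degree L = 1 ∧ L ≠ r := by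
  obtain ⟨L, hL, hpos, _⟩ := exists_far_leaf hH hcard r
  refine ⟨L, hL, ?_⟩
  rintro rfl; rw [SimpleGraph.dist_self] at hpos; omega

/-- Every vertex lies on the path from the root leaf `ρ` to some other leaf. -/
lemma exists_leaf_path (hcard : 1 < Fintype.card α) {ρ : α} (hρ : H.degree ρ = 1) :
    ∀ v : α, ∃ L, H.degree L = 1 ∧ L ≠ ρ ∧ v ∈ (tp hH ρ L).support := by
  suffices h : ∀ n v, Fintype.card α - H.dist ρ v = n →
      ∃ L, H.degree L = 1 ∧ L ≠ ρ ∧ v ∈ (tp hH ρ L).support by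
    intro v; exact h _ v rfl
  intro n
  induction n using Nat.strong_induction_on with
  | _ n IH =>
    intro v hn
    by_cases hv : v = ρ
    · obtain ⟨L, hL, hLρ⟩ := exists_other_leaf hH hcard ρ
      exact ⟨L, hL, hLρ, hv ▸ Walk.start_mem_support _⟩
    by_cases hd : H.degree v = 1
    · exact ⟨v, hd, hv, Walk.end_mem_support _⟩
    · obtain ⟨u, e, heq, hneu, hdu⟩ := tp_concat_decomp hH (Ne.symm hv)
      have hu : u ∈ (tp hH ρ v).support := by
        rw [heq, Walk.support_concat]; simp [Walk.end_mem_support]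
      have hu' : u ∈ H.neighborFinset v := (H.mem_neighborFinset v u).mpr e.symm
      have hdeg2 : 1 < (H.neighborFinset v).card := by
        have h1 : 0 < (H.neighborFinset v).card := Finset.card_pos.mpr ⟨u, hu'⟩
        have h2 : (H.neighborFinset v).card ≠ 1 := by
          rwa [H.card_neighborFinset_eq_degree]
        omega
      obtain ⟨x, hx, hxu⟩ := Finset.exists_mem_ne hdeg2 u
      have e' : H.Adj v x := (H.mem_neighborFinset v x).mp hx
      have hxs : x ∉ (tp hH ρ v).support := by
        intro hmem
        have h1 := dist_add_of_mem hH hmem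
        have h2 := dist_adj hH e'.symm
        exact hxu (eq_of_mem_of_dist_eq hH hmem hu (by omega))
      obtain ⟨heq2, hd2⟩ := tp_concat_of_not_mem hH e' hxs
      have hlt : H.dist ρ x < Fintype.card α := by
        rw [← tp_length hH]
        exact (tp_isPath hH ρ x).length_lt
      obtain ⟨L, hL, hLρ, hxL⟩ := IH (Fintype.card α - H.dist ρ x) (by omega) x rfl
      refine ⟨L, hL, hLρ, ?_⟩
      apply tp_support_subset_left hH hxL
      rw [heq2, Walk.support_concat]
      simp [Walk.end_mem_support]

omit [Fintype α] [DecidableRel H.Adj]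

/-- Connected subsets of a tree are convex: they contain the unique path between
any two of their points. -/
lemma convex_of_connSub {Sw : Set α} (hconn : ConnSub H Sw) :
    ∀ a b : α, a ∈ Sw → b ∈ Sw → ∀ y ∈ (tp hH a b).support, y ∈ Sw := by
  intro a b ha hb y hy
  obtain ⟨q⟩ := (hconn ⟨a, ha⟩).preconnected ⟨a, ha⟩ ⟨b, hb⟩
  let w2 : H.Walk a b := q.map (SimpleGraph.Embedding.induce Sw).toHom
  have hsupp : ∀ z ∈ w2.support, z ∈ Sw := by
    intro z hz
    have h := Walk.support_map (Embedding.induce Sw).toHom q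
    rw [show w2.support = _ from h, List.mem_map] at hz
    obtain ⟨⟨z', hz'⟩, _, rfl⟩ := hz
    exact hz'
  have hbp : w2.bypass.IsPath := Walk.bypass_isPath w2
  have heq : tp hH a b = w2.bypass := (tp_eq hH _ hbp).symm
  rw [heq] at hy
  exact hsupp y (Walk.support_bypass_subset w2 hy)

omit hH

lemma no_step (hconn : H.Connected) (X : SimpleGraph α) : ¬ SubdivideEdge H X := by
  rintro ⟨u, v, w, huv, hw, -⟩
  have hwu : w ≠ u := by
    rintro rfl; exact hw (H.mem_support.mpr ⟨v, huv⟩)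
  obtain ⟨p⟩ := hconn.preconnected w u
  cases p with
  | nil => exact hwu rfl
  | cons h q => exact hw (H.mem_support.mpr ⟨_, h⟩)

lemma subdivision_eq (hconn : H.Connected) {H' : SimpleGraph α}
    (hsub : IsSubdivisionOf H H') : H' = H := by
  rcases Relation.ReflTransGen.cases_head hsub with h | ⟨c, hc, -⟩
  · exact h.symm
  · exact absurd hc (no_step hconn c)

end ThinAux

end ThinAuxSection

open SimpleGraph ThinAux in
/-- Let `G` be an `H`-graph for a tree `H` with exactly `ℓ` leaves. If `ℓ ≥ 2`
then `G` has thinness at most `ℓ - 1`; if `ℓ ≤ 1` (so `H` is a single vertex)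
then `G` is a complete graph and has thinness `1`. -/
theorem thinness_of_tree_H_graph {α W : Type*} [Fintype α] [Fintype W]
    (H : SimpleGraph α) [DecidableRel H.Adj] (hH : H.IsTree)
    (ℓ : ℕ) (hleaf : {v : α | H.degree v = 1}.ncard = ℓ)
    (H' : SimpleGraph α) (hsub : IsSubdivisionOf H H')
    (S : W → Set α) (hS : ∀ w, (S w).Nonempty ∧ ConnSub H' (S w))
    (G : SimpleGraph W)
    (hadj : ∀ u v : W, u ≠ v → (G.Adj u v ↔ (S u ∩ S v).Nonempty)) :
    (2 ≤ ℓ → IsKThin G (ℓ - 1)) ∧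
    (ℓ ≤ 1 → (∀ u v : W, u ≠ v → G.Adj u v) ∧ IsKThin G 1) := by
  classical
  have hHeq : H' = H := subdivision_eq hH.isConnected hsub
  subst H'
  have hne : Nonempty α := hH.isConnected.nonempty
  rcases le_or_gt (Fintype.card α) 1 with hcard | hcard
  · -- `α` is a single vertex
    have hsingle : Subsingleton α := Fintype.card_le_one_iff_subsingleton.mp hcard
    have hcomplete : ∀ u v : W, u ≠ v → G.Adj u v := by
      intro u v huv
      rw [hadj u v huv]
      obtain ⟨a, ha⟩ := (hS u).1
      obtain ⟨b, hb⟩ := (hS v).1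
      exact ⟨a, ha, Subsingleton.elim a b ▸ hb⟩
    have hthin1 : IsKThin G 1 := by
      refine ⟨fun w => ((Fintype.equivFin W w : ℕ)), ?_, fun _ => 0, ?_⟩
      · intro a b hab
        exact (Fintype.equivFin W).injective (Fin.ext hab)
      · intro r s t h1 h2 _ _
        exact hcomplete s t (by rintro rfl; omega)
    refine ⟨?_, fun _ => ⟨hcomplete, hthin1⟩⟩
    intro h2
    exfalso
    have hempty : {v : α | H.degree v = 1} = ∅ := by
      ext v
      simp only [Set.mem_setOf_eq, Set.mem_empty_iff_false, iff_false]
      intro hdeg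
      have h3 : H.degree v < Fintype.card α := H.degree_lt_card_verts v
      omega
    rw [hempty, Set.ncard_empty] at hleaf
    omega
  · -- `α` has at least two vertices
    -- the set of leaves
    obtain ⟨ρ, hρ, hρne⟩ := exists_other_leaf hH hcard (Classical.arbitrary α)
    have hℓLf : ℓ = (Finset.univ.filter (fun v => H.degree v = 1)).card := by
      rw [← hleaf, Set.ncard_eq_toFinset_card', Set.toFinset_setOf]
    have hℓ2 : 2 ≤ ℓ := by
      obtain ⟨L', hL', hL'ρ⟩ := exists_other_leaf hH hcard ρ
      rw [hℓLf]
      apply Finset.one_lt_card.mpr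
      exact ⟨ρ, by simp [hρ], L', by simp [hL'], fun h => hL'ρ h.symm⟩
    refine ⟨fun _ => ?_, fun h1 => absurd h1 (by omega)⟩
    -- the construction
    set F : Finset α := (Finset.univ.filter (fun v => H.degree v = 1)).erase ρ with hFdef
    have hFcard : F.card = ℓ - 1 := by
      rw [hFdef, Finset.card_erase_of_mem (by simp [hρ]), ← hℓLf]
    have hFmem : ∀ {L : α}, H.degree L = 1 → L ≠ ρ → L ∈ F := by
      intro L h1 h2
      rw [hFdef]
      simp [Finset.mem_erase, h1, h2]
    let e : ↥F ≃ Fin (ℓ - 1) :=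
      Fintype.equivFinOfCardEq (by rw [Fintype.card_coe, hFcard])
    -- closest points
    have hmin : ∀ w : W, ∃ p, p ∈ S w ∧ ∀ y ∈ S w, H.dist ρ p ≤ H.dist ρ y :=
      fun w => Set.exists_min_image (S w) (H.dist ρ) (S w).toFinite (hS w).1
    set pw : W → α := fun w => (hmin w).choose with hpwdef
    have hpw1 : ∀ w, pw w ∈ S w := fun w => (hmin w).choose_spec.1
    have hpw2 : ∀ w, ∀ y ∈ S w, H.dist ρ (pw w) ≤ H.dist ρ y :=
      fun w => (hmin w).choose_spec.2
    -- convexity of the sets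
    have hconv : ∀ (w : W), ∀ a b : α, a ∈ S w → b ∈ S w →
        ∀ y ∈ (tp hH a b).support, y ∈ S w :=
      fun w => convex_of_connSub hH (hS w).2
    -- associated leaves
    have hLex : ∀ w : W, ∃ L, H.degree L = 1 ∧ L ≠ ρ ∧ pw w ∈ (tp hH ρ L).support :=
      fun w => exists_leaf_path hH hcard hρ (pw w)
    set Lw : W → α := fun w => (hLex w).choose with hLwdef
    have hLw1 : ∀ w, H.degree (Lw w) = 1 := fun w => (hLex w).choose_spec.1
    have hLw2 : ∀ w, Lw w ≠ ρ := fun w => (hLex w).choose_spec.2.1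
    have hLw3 : ∀ w, pw w ∈ (tp hH ρ (Lw w)).support :=
      fun w => (hLex w).choose_spec.2.2
    -- the coloring
    set cls : W → Fin (ℓ - 1) := fun w => e ⟨Lw w, hFmem (hLw1 w) (hLw2 w)⟩ with hclsdef
    -- the ordering
    set M : ℕ := Fintype.card W + 1 with hMdef
    set g : W → ℕ := fun w => ((Fintype.equivFin W w : ℕ)) with hgdef
    have hgM : ∀ w, g w < M := fun w => Nat.lt_succ_of_lt (Fintype.equivFin W w).2
    have hdlt : ∀ v : α, H.dist ρ v < Fintype.card α := by
      intro v
      rw [← tp_length hH]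
      exact (tp_isPath hH ρ v).length_lt
    set f : W → ℕ :=
      fun w => M * (Fintype.card α - H.dist ρ (pw w)) + g w with hfdef
    have hfinj : Function.Injective f := by
      intro a b hab
      have hga := hgM a
      have hgb := hgM b
      have hmod : g a = g b := by
        have h1 : (f a) % M = (f b) % M := by rw [hab]
        rw [hfdef] at h1
        simp only [Nat.mul_add_mod] at h1
        rwa [Nat.mod_eq_of_lt hga, Nat.mod_eq_of_lt hgb] at h1
      exact (Fintype.equivFin W).injective (Fin.ext hmod)
    have horder : ∀ a b : W, f a < f b → H.dist ρ (pw b) ≤ H.dist ρ (pw a) := by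
      intro a b hfab
      by_contra hlt
      push_neg at hlt
      have hda := hdlt (pw a)
      have hdb := hdlt (pw b)
      have hq : Fintype.card α - H.dist ρ (pw b) + 1 ≤
          Fintype.card α - H.dist ρ (pw a) := by omega
      have hgb := hgM b
      have : f b < f a := by
        calc f b = M * (Fintype.card α - H.dist ρ (pw b)) + g b := rfl
          _ < M * (Fintype.card α - H.dist ρ (pw b)) + M := by omega
          _ = M * (Fintype.card α - H.dist ρ (pw b) + 1) := by ring
          _ ≤ M * (Fintype.card α - H.dist ρ (pw a)) := Nat.mul_le_mul_left M hq
          _ ≤ f a := Nat.le_add_right _ _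
      omega
    refine ⟨f, hfinj, cls, ?_⟩
    intro r s t h1 h2 hcls hadjrt
    have hds : H.dist ρ (pw s) ≤ H.dist ρ (pw r) := horder r s h1
    have hdt : H.dist ρ (pw t) ≤ H.dist ρ (pw s) := horder s t h2
    have hLrs : Lw r = Lw s := by
      have := e.injective hcls
      exact congrArg Subtype.val this
    have hrt : r ≠ t := G.ne_of_adj hadjrt
    obtain ⟨x, hxr, hxt⟩ := (hadj r t hrt).mp hadjrt
    have hpr : pw r ∈ (tp hH ρ x).support :=
      gate hH (hconv r) (hpw1 r) (hpw2 r) _ x rfl hxr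
    have hpt : pw t ∈ (tp hH ρ x).support :=
      gate hH (hconv t) (hpw1 t) (hpw2 t) _ x rfl hxt
    have hs' : pw s ∈ (tp hH ρ (Lw r)).support := hLrs ▸ hLw3 s
    have hps_pr : pw s ∈ (tp hH ρ (pw r)).support :=
      mem_of_le hH hs' (hLw3 r) hds
    have hps_x : pw s ∈ (tp hH ρ x).support :=
      tp_support_subset_left hH hpr hps_pr
    have hpsSt : pw s ∈ S t := by
      rw [tp_split hH hpt, SimpleGraph.Walk.mem_support_append_iff] at hps_x
      rcases hps_x with h | h
      · have h3 := dist_add_of_mem hH h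
        have h4 : H.dist (pw s) (pw t) = 0 := by omega
        have h5 : pw s = pw t := dist_eq_zero hH h4
        rw [h5]
        exact hpw1 t
      · exact hconv t (pw t) x (hpw1 t) hxt _ h
    have hst : s ≠ t := by rintro rfl; omega
    exact (hadj s t hst).mpr ⟨pw s, hpw1 s, hpsSt⟩
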